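/- arXiv:1403.0046 — 2 statements merged into one kernel-verified Lean document; each statement's English description precedes it below -/
import Mathlib

section
/- Let V and Q be finite-dimensional real normed vector spaces, a : V × V → ℝ a symmetric bilinear form with a(v,v) ≥ 0 for all v ∈ V, and b : V × Q → ℝ a bilinear form. For v ∈ V define S(v) := sup over nonzero q ∈ Q of |b(v,q)|/‖q‖_Q, and define ‖v‖_{V_Q} := (a(v,v) + S(v)²)^{1/2}. Assume that ‖v‖_{V_Q} = 0 implies v = 0 (so ‖·‖_{V_Q} is a norm on V), and assume there is β > 0 such that for every q ∈ Q, sup over nonzero v ∈ V of b(v,q)/‖v‖_{V_Q} is at least β·‖q‖_Q. Then for every linear functional g on V there exists a unique pair (v,p) ∈ V × Q such that a(v,φ) + b(φ,p) = g(φ) for all φ ∈ V and b(v,q) = 0 for all q ∈ Q; moreover ‖v‖_{V_Q} ≤ ‖g‖_* and ‖p‖_Q ≤ (2/β)·‖g‖_*, where ‖g‖_* := sup over nonzero φ ∈ V of |g(φ)|/‖φ‖_{V_Q}. -/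
set_option maxHeartbeats 1000000

private lemma cs_aux {V : Type*} [AddCommGroup V] [Module ℝ V]
    (a : V →ₗ[ℝ] V →ₗ[ℝ] ℝ) (ha_symm : ∀ u v : V, a u v = a v u)
    (ha_pos : ∀ v : V, 0 ≤ a v v) (u v : V) :
    (a u v) ^ 2 ≤ a u u * a v v := by
  have key : ∀ t : ℝ, 0 ≤ a u u + 2 * t * a u v + t ^ 2 * a v v := by
    intro t
    have h := ha_pos (u + t • v)
    simp only [map_add, map_smul, LinearMap.add_apply, LinearMap.smul_apply,
      smul_eq_mul] at h
    have heq : a u u + 2 * t * a u v + t ^ 2 * a v v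
        = a u u + t * a v u + t * (a u v + t * a v v) := by
      rw [ha_symm v u]; ring
    rw [heq]
    linarith
  rcases eq_or_lt_of_le (ha_pos v) with h0 | hpos
  · have hb : a u v = 0 := by
      by_contra hb
      have h1 := key (-(a u u + 1) / (2 * a u v))
      rw [← h0] at h1
      have h2 : 2 * (-(a u u + 1) / (2 * a u v)) * a u v = -(a u u + 1) := by
        field_simp
      rw [mul_zero, add_zero, h2] at h1
      linarith
    rw [hb, ← h0]
    simp
  · have h1 := key (-(a u v) / (a v v))
    have heq : a u u + 2 * (-(a u v) / (a v v)) * a u v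
        + (-(a u v) / (a v v)) ^ 2 * a v v
        = a u u - (a u v) ^ 2 / (a v v) := by
      field_simp
      ring
    rw [heq] at h1
    have h2 := (div_le_iff₀ hpos).mp (by linarith : (a u v) ^ 2 / (a v v) ≤ a u u)
    linarith


/-- Abstract content of Theorem 3.3 of the paper: well-posedness of the
finite element saddle-point problem when the velocity space carries the
pressure-dependent norm `‖v‖_{V_Q}² = a(v,v) + S(v)²` with
`S(v) = sup_{q ≠ 0} |b(v,q)|/‖q‖`. -/
theorem wellposed_newnorm
    {V Q : Type*}
    [NormedAddCommGroup V] [NormedSpace ℝ V] [FiniteDimensional ℝ V]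
    [NormedAddCommGroup Q] [NormedSpace ℝ Q] [FiniteDimensional ℝ Q]
    (a : V →ₗ[ℝ] V →ₗ[ℝ] ℝ) (b : V →ₗ[ℝ] Q →ₗ[ℝ] ℝ)
    (ha_symm : ∀ u v : V, a u v = a v u)
    (ha_pos : ∀ v : V, 0 ≤ a v v)
    (S N : V → ℝ)
    (hS : ∀ v : V, S v = ⨆ q : {q : Q // q ≠ 0}, |b v q.1| / ‖q.1‖)
    (hN : ∀ v : V, N v = Real.sqrt (a v v + S v ^ 2))
    (hNdef : ∀ v : V, N v = 0 → v = 0)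
    (β : ℝ) (hβ : 0 < β)
    (hinfsup : ∀ q : Q, β * ‖q‖ ≤ ⨆ v : {v : V // v ≠ 0}, b v.1 q / N v.1) :
    ∀ g : V →ₗ[ℝ] ℝ, ∀ gs : ℝ,
      gs = (⨆ φ : {φ : V // φ ≠ 0}, |g φ.1| / N φ.1) →
      (∃! vp : V × Q,
        (∀ φ : V, a vp.1 φ + b φ vp.2 = g φ) ∧ (∀ q : Q, b vp.1 q = 0)) ∧
      (∀ vp : V × Q,
        ((∀ φ : V, a vp.1 φ + b φ vp.2 = g φ) ∧ (∀ q : Q, b vp.1 q = 0)) →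
          N vp.1 ≤ gs ∧ ‖vp.2‖ ≤ (2 / β) * gs) := by
  classical
  intro g gs hgs
  -- continuous versions of the bilinear forms and g
  set B2 : V →L[ℝ] Q →L[ℝ] ℝ :=
    LinearMap.toContinuousLinearMap
      ((LinearMap.toContinuousLinearMap (E := Q) (F' := ℝ)).toLinearMap ∘ₗ b) with hB2
  have hB2apply : ∀ (v : V) (q : Q), B2 v q = b v q := by
    intro v q
    rw [hB2]
    simp [LinearMap.coe_toContinuousLinearMap']
  have hb_bound : ∀ (v : V) (q : Q), |b v q| ≤ ‖B2‖ * ‖v‖ * ‖q‖ := by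
    intro v q
    have h1 : ‖B2 v q‖ ≤ ‖B2 v‖ * ‖q‖ := (B2 v).le_opNorm q
    have h2 : ‖B2 v‖ ≤ ‖B2‖ * ‖v‖ := B2.le_opNorm v
    have h3 : ‖B2 v q‖ = |b v q| := by rw [hB2apply, Real.norm_eq_abs]
    rw [← h3]
    exact h1.trans (mul_le_mul_of_nonneg_right h2 (norm_nonneg q))
  -- basic facts about S
  have hSb : ∀ v : V,
      BddAbove (Set.range fun q : {q : Q // q ≠ 0} => |b v q.1| / ‖q.1‖) := by
    intro v
    refine ⟨‖B2‖ * ‖v‖, ?_⟩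
    rintro x ⟨q, rfl⟩
    have hq : (0:ℝ) < ‖q.1‖ := norm_pos_iff.mpr q.2
    rw [div_le_iff₀ hq]
    exact hb_bound v q.1
  have hSge : ∀ (v : V) (q : Q), q ≠ 0 → |b v q| / ‖q‖ ≤ S v := by
    intro v q hq
    rw [hS]
    exact le_ciSup (hSb v) ⟨q, hq⟩
  have hS0 : ∀ v : V, 0 ≤ S v := by
    intro v
    rw [hS]
    exact Real.iSup_nonneg fun q => div_nonneg (abs_nonneg _) (norm_nonneg _)
  have hb_le : ∀ (v : V) (q : Q), |b v q| ≤ S v * ‖q‖ := by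
    intro v q
    rcases eq_or_ne q 0 with rfl | hq
    · simp
    · have hqn : (0:ℝ) < ‖q‖ := norm_pos_iff.mpr hq
      exact (div_le_iff₀ hqn).mp (hSge v q hq)
  have hSzero : ∀ v : V, (∀ q : Q, b v q = 0) → S v = 0 := by
    intro v hv
    refine le_antisymm ?_ (hS0 v)
    rw [hS]
    exact Real.iSup_nonpos fun q => by simp [hv q.1]
  have hSadd : ∀ u v : V, S (u + v) ≤ S u + S v := by
    intro u v
    rw [hS]
    refine Real.iSup_le (fun q => ?_) (add_nonneg (hS0 u) (hS0 v))
    have h1 := hSge u q.1 q.2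
    have h2 := hSge v q.1 q.2
    have h3 : |b (u + v) q.1| / ‖q.1‖ ≤ |b u q.1| / ‖q.1‖ + |b v q.1| / ‖q.1‖ := by
      rw [← add_div]
      gcongr
      rw [map_add, LinearMap.add_apply]
      exact abs_add_le _ _
    linarith
  -- basic facts about N
  have hN0 : ∀ v : V, 0 ≤ N v := by
    intro v; rw [hN]; exact Real.sqrt_nonneg _
  have hNsq : ∀ v : V, N v ^ 2 = a v v + S v ^ 2 := by
    intro v; rw [hN]
    exact Real.sq_sqrt (add_nonneg (ha_pos v) (sq_nonneg _))
  have hSleN : ∀ v : V, S v ≤ N v := by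
    intro v
    rw [hN]
    calc S v = Real.sqrt (S v ^ 2) := (Real.sqrt_sq (hS0 v)).symm
      _ ≤ Real.sqrt (a v v + S v ^ 2) := Real.sqrt_le_sqrt (by linarith [ha_pos v])
  have haleN : ∀ v : V, a v v ≤ N v ^ 2 := by
    intro v; rw [hNsq]; linarith [sq_nonneg (S v)]
  have hNpos : ∀ v : V, v ≠ 0 → 0 < N v := by
    intro v hv
    rcases (hN0 v).lt_or_eq with h | h
    · exact h
    · exact absurd (hNdef v h.symm) hv
  have hNzero : N (0 : V) = 0 := by
    rw [hN]
    have h1 : a (0 : V) 0 = 0 := by simp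
    have h2 : S (0 : V) = 0 := hSzero 0 (by simp)
    rw [h1, h2]
    simp
  have hCS : ∀ u v : V, |a u v| ≤ N u * N v := by
    intro u v
    have h1 := cs_aux a ha_symm ha_pos u v
    have h2 : (a u v) ^ 2 ≤ (N u * N v) ^ 2 := by
      calc (a u v) ^ 2 ≤ a u u * a v v := h1
        _ ≤ N u ^ 2 * N v ^ 2 := mul_le_mul (haleN u) (haleN v) (ha_pos v) (sq_nonneg (N u))
        _ = (N u * N v) ^ 2 := by ring
    have h3 : 0 ≤ N u * N v := mul_nonneg (hN0 u) (hN0 v)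
    calc |a u v| = Real.sqrt ((a u v) ^ 2) := (Real.sqrt_sq_eq_abs _).symm
      _ ≤ Real.sqrt ((N u * N v) ^ 2) := Real.sqrt_le_sqrt h2
      _ = N u * N v := Real.sqrt_sq h3
  -- case split on triviality of V
  rcases subsingleton_or_nontrivial V with hV | hV
  · -- V is trivial; then Q is trivial as well
    haveI hEV : IsEmpty {v : V // v ≠ 0} := ⟨fun x => x.2 (Subsingleton.elim _ _)⟩
    have hQ0 : ∀ q : Q, q = 0 := by
      intro q
      have h := hinfsup q
      rw [Real.iSup_of_isEmpty] at h
      have h2 : ‖q‖ ≤ 0 := le_of_mul_le_mul_left (by rw [mul_zero]; exact h) hβ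
      exact norm_le_zero_iff.mp h2
    have hgs0 : gs = 0 := by rw [hgs, Real.iSup_of_isEmpty]
    constructor
    · refine ⟨(0, 0), ⟨?_, ?_⟩, ?_⟩
      · intro φ
        have hφ0 : φ = 0 := Subsingleton.elim _ _
        simp [hφ0]
      · intro q; simp
      · rintro y ⟨hy1, hy2⟩
        exact Prod.ext (Subsingleton.elim _ _) (hQ0 y.2)
    · intro vp _
      have h1 : vp.1 = 0 := Subsingleton.elim _ _
      have h2 : vp.2 = 0 := hQ0 vp.2
      rw [h1, h2, hgs0, hNzero]
      simp
  · -- V is nontrivial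
    haveI : Nonempty {v : V // v ≠ 0} := by
      obtain ⟨x, hx⟩ := exists_ne (0 : V)
      exact ⟨⟨x, hx⟩⟩
    -- continuity of N and the lower bound c1 * ‖v‖ ≤ N v
    have hSsub : ∀ u v : V, S u - S v ≤ ‖B2‖ * ‖u - v‖ := by
      intro u v
      have h1 : S u ≤ S v + S (u - v) := by
        have := hSadd v (u - v)
        simpa using this
      have h2 : S (u - v) ≤ ‖B2‖ * ‖u - v‖ := by
        rw [hS]
        refine Real.iSup_le (fun q => ?_) (by positivity)
        have hq : (0:ℝ) < ‖q.1‖ := norm_pos_iff.mpr q.2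
        rw [div_le_iff₀ hq]
        exact hb_bound _ _
      linarith
    have hScont : Continuous S := by
      refine LipschitzWith.continuous (K := ‖B2‖.toNNReal) ?_
      refine LipschitzWith.of_dist_le_mul fun u v => ?_
      rw [Real.dist_eq, dist_eq_norm, Real.coe_toNNReal _ (norm_nonneg B2)]
      rw [abs_sub_le_iff]
      constructor
      · exact hSsub u v
      · rw [norm_sub_rev]
        exact hSsub v u
    have haacont : Continuous fun v : V => a v v := by
      set A2 : V →L[ℝ] V →L[ℝ] ℝ :=
        LinearMap.toContinuousLinearMap
          ((LinearMap.toContinuousLinearMap (E := V) (F' := ℝ)).toLinearMap ∘ₗ a) with hA2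
      have hA2apply : ∀ u v : V, A2 u v = a u v := by
        intro u v
        rw [hA2]
        simp [LinearMap.coe_toContinuousLinearMap']
      have heq : (fun v : V => a v v) = fun v => A2 v v :=
        funext fun v => (hA2apply v v).symm
      rw [heq]
      exact A2.continuous.clm_apply continuous_id
    have hNcont : Continuous N := by
      have heq : N = fun v => Real.sqrt (a v v + S v ^ 2) := funext hN
      rw [heq]
      exact Real.continuous_sqrt.comp (haacont.add (hScont.pow 2))
    obtain ⟨x0, hx0, hmin⟩ := (isCompact_sphere (0:V) 1).exists_isMinOn
      (NormedSpace.sphere_nonempty.mpr zero_le_one) hNcont.continuousOn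
    have hx0n : ‖x0‖ = 1 := mem_sphere_zero_iff_norm.mp hx0
    have hx0ne : x0 ≠ 0 := by
      intro h; rw [h] at hx0n; simp at hx0n
    have hc1 : 0 < N x0 := hNpos x0 hx0ne
    have hNsmul : ∀ (c : ℝ) (v : V), N (c • v) = |c| * N v := by
      intro c v
      have hSsmul : S (c • v) = |c| * S v := by
        rw [hS v, Real.mul_iSup_of_nonneg (abs_nonneg c), hS]
        congr 1
        funext q
        rw [map_smul, LinearMap.smul_apply, smul_eq_mul, abs_mul, mul_div_assoc]
      rw [hN, hN, hSsmul]
      have h1 : a (c • v) (c • v) = c ^ 2 * a v v := by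
        simp only [map_smul, LinearMap.smul_apply, smul_eq_mul]
        ring
      rw [h1]
      have h2 : c ^ 2 * a v v + (|c| * S v) ^ 2 = c ^ 2 * (a v v + S v ^ 2) := by
        rw [mul_pow, sq_abs]; ring
      rw [h2, Real.sqrt_mul (sq_nonneg c), Real.sqrt_sq_eq_abs]
    have hlow : ∀ v : V, N x0 * ‖v‖ ≤ N v := by
      intro v
      rcases eq_or_ne v 0 with rfl | hv
      · simp [hNzero]
      · have hvn : (0:ℝ) < ‖v‖ := norm_pos_iff.mpr hv
        have hu : ‖(‖v‖⁻¹ • v)‖ = 1 := by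
          rw [norm_smul, norm_inv, norm_norm, inv_mul_cancel₀ (ne_of_gt hvn)]
        have hmem : (‖v‖⁻¹ • v) ∈ Metric.sphere (0:V) 1 :=
          mem_sphere_zero_iff_norm.mpr hu
        have h1 : N x0 ≤ N (‖v‖⁻¹ • v) := hmin hmem
        rw [hNsmul, abs_inv, abs_norm] at h1
        calc N x0 * ‖v‖ ≤ (‖v‖⁻¹ * N v) * ‖v‖ :=
              mul_le_mul_of_nonneg_right h1 (norm_nonneg v)
          _ = N v := by field_simp
    -- facts about gs
    set gC : V →L[ℝ] ℝ := LinearMap.toContinuousLinearMap g with hgC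
    have hg_bound : ∀ φ : V, |g φ| ≤ ‖gC‖ * ‖φ‖ := by
      intro φ
      have h1 : ‖gC φ‖ ≤ ‖gC‖ * ‖φ‖ := gC.le_opNorm φ
      have h2 : gC φ = g φ := by rw [hgC]; simp [LinearMap.coe_toContinuousLinearMap']
      rw [h2, Real.norm_eq_abs] at h1
      exact h1
    have hgs_bdd : BddAbove (Set.range fun φ : {φ : V // φ ≠ 0} => |g φ.1| / N φ.1) := by
      refine ⟨‖gC‖ / N x0, ?_⟩
      rintro x ⟨φ, rfl⟩
      have hφ : (0:ℝ) < N φ.1 := hNpos _ φ.2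
      rw [div_le_div_iff₀ hφ hc1]
      have h1 := hg_bound φ.1
      have h2 := hlow φ.1
      calc |g φ.1| * N x0 ≤ (‖gC‖ * ‖φ.1‖) * N x0 :=
            mul_le_mul_of_nonneg_right h1 hc1.le
        _ = ‖gC‖ * (N x0 * ‖φ.1‖) := by ring
        _ ≤ ‖gC‖ * N φ.1 := mul_le_mul_of_nonneg_left h2 (norm_nonneg gC)
    have hgs0 : 0 ≤ gs := by
      rw [hgs]
      exact Real.iSup_nonneg fun φ => div_nonneg (abs_nonneg _) (hN0 _)
    have hg_le : ∀ φ : V, |g φ| ≤ gs * N φ := by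
      intro φ
      rcases eq_or_ne φ 0 with rfl | hφ
      · simp [hNzero]
      · have h1 : |g φ| / N φ ≤ gs := by
          rw [hgs]
          exact le_ciSup hgs_bdd ⟨φ, hφ⟩
        exact (div_le_iff₀ (hNpos φ hφ)).mp h1
    -- the combined bilinear form on V × Q
    obtain ⟨c2, hc2apply⟩ : ∃ c2 : (V × Q) →ₗ[ℝ] (V × Q) →ₗ[ℝ] ℝ,
        ∀ x y : V × Q, c2 x y = a x.1 y.1 + b y.1 x.2 + b x.1 y.2 :=
      ⟨LinearMap.mk₂ ℝ (fun x y => a x.1 y.1 + b y.1 x.2 + b x.1 y.2)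
        (by intro m₁ m₂ n; simp [Prod.fst_add, Prod.snd_add]; ring)
        (by intro c m n; simp [Prod.smul_fst, Prod.smul_snd]; ring)
        (by intro m n₁ n₂; simp [Prod.fst_add, Prod.snd_add]; ring)
        (by intro c m n; simp [Prod.smul_fst, Prod.smul_snd]; ring),
        fun x y => rfl⟩
    have hinj : Function.Injective c2 := by
      rw [injective_iff_map_eq_zero]
      intro x hx
      have hxa : ∀ (φ : V) (q : Q), a x.1 φ + b φ x.2 + b x.1 q = 0 := by
        intro φ q
        have h := DFunLike.congr_fun hx (φ, q)
        rw [hc2apply] at h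
        simpa using h
      have hker : ∀ q : Q, b x.1 q = 0 := by
        intro q
        have h := hxa 0 q
        simpa using h
      have hSx : S x.1 = 0 := hSzero _ hker
      have hax : a x.1 x.1 = 0 := by
        have h := hxa x.1 0
        have h2 := hker x.2
        simp only [map_zero] at h
        linarith
      have hx1 : x.1 = 0 := by
        apply hNdef
        rw [hN, hSx, hax]
        simp
      have hbp : ∀ φ : V, b φ x.2 = 0 := by
        intro φ
        have h := hxa φ 0
        rw [hx1] at h
        simpa using h
      have hx2 : x.2 = 0 := by
        have h := hinfsup x.2
        have h2 : (⨆ v : {v : V // v ≠ 0}, b v.1 x.2 / N v.1) ≤ 0 :=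
          Real.iSup_nonpos fun v => by simp [hbp v.1]
        have h3 : ‖x.2‖ ≤ 0 :=
          le_of_mul_le_mul_left (by rw [mul_zero]; linarith) hβ
        exact norm_le_zero_iff.mp h3
      exact Prod.ext hx1 hx2
    have hdim : Module.finrank ℝ (V × Q) = Module.finrank ℝ ((V × Q) →ₗ[ℝ] ℝ) :=
      (Subspace.dual_finrank_eq (K := ℝ) (V := V × Q)).symm
    have hsurj : Function.Surjective c2 :=
      (LinearMap.injective_iff_surjective_of_finrank_eq_finrank hdim).mp hinj
    obtain ⟨x, hx⟩ := hsurj (g ∘ₗ LinearMap.fst ℝ V Q)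
    have hx1 : ∀ φ : V, a x.1 φ + b φ x.2 = g φ := by
      intro φ
      have h := DFunLike.congr_fun hx (φ, (0:Q))
      rw [hc2apply] at h
      simpa using h
    have hx2 : ∀ q : Q, b x.1 q = 0 := by
      intro q
      have h := DFunLike.congr_fun hx ((0:V), q)
      rw [hc2apply] at h
      simpa using h
    constructor
    · refine ⟨x, ⟨hx1, hx2⟩, ?_⟩
      rintro y ⟨hy1, hy2⟩
      apply hinj
      apply LinearMap.ext
      intro z
      rw [hc2apply, hc2apply]
      have h1 := hy1 z.1
      have h2 := hy2 z.2
      have h3 := hx1 z.1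
      have h4 := hx2 z.2
      linarith
    · rintro vp ⟨h1, h2⟩
      have hSvp : S vp.1 = 0 := hSzero _ h2
      have hNsq' : N vp.1 ^ 2 = a vp.1 vp.1 := by
        rw [hNsq, hSvp]; ring
      have hav : a vp.1 vp.1 = g vp.1 := by
        have ha := h1 vp.1
        have hb := h2 vp.2
        linarith
      have hNle : N vp.1 ≤ gs := by
        rcases (hN0 vp.1).eq_or_lt with h0 | hpos
        · rw [← h0]; exact hgs0
        · have h3 : N vp.1 ^ 2 ≤ gs * N vp.1 := by
            rw [hNsq', hav]
            exact le_trans (le_abs_self _) (hg_le vp.1)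
          have h4 : N vp.1 * N vp.1 ≤ gs * N vp.1 := by
            rw [← pow_two]; exact h3
          exact le_of_mul_le_mul_right h4 hpos
      refine ⟨hNle, ?_⟩
      have hsup : (⨆ v : {v : V // v ≠ 0}, b v.1 vp.2 / N v.1) ≤ 2 * gs := by
        refine Real.iSup_le (fun v => ?_) (by linarith)
        have hNv : (0:ℝ) < N v.1 := hNpos _ v.2
        have hb' : b v.1 vp.2 = g v.1 - a vp.1 v.1 := by
          have := h1 v.1; linarith
        rw [div_le_iff₀ hNv]
        have h3 := hg_le v.1
        have h4 : |a vp.1 v.1| ≤ gs * N v.1 :=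
          le_trans (hCS vp.1 v.1) (mul_le_mul_of_nonneg_right hNle (le_of_lt hNv))
        have h5 := le_abs_self (g v.1)
        have h6 := neg_abs_le (a vp.1 v.1)
        rw [hb']
        linarith
      have h7 : β * ‖vp.2‖ ≤ 2 * gs := le_trans (hinfsup vp.2) hsup
      have h8 : ‖vp.2‖ ≤ 2 * gs / β := by
        rw [le_div_iff₀ hβ]
        linarith
      calc ‖vp.2‖ ≤ 2 * gs / β := h8
        _ = (2 / β) * gs := by ring
end

section
/- Let V and Q be real Hilbert spaces, a : V × V → ℝ a symmetric bilinear form with a(v,v) = ‖v‖_V² for all v ∈ V, c : V × V → ℝ a bilinear form with |c(u,v)| ≤ c₀·‖u‖_V·‖v‖_V for all u,v ∈ V, where 0 ≤ c₀ < 1 is a constant, and b : V × Q → ℝ a bilinear form with |b(v,q)| ≤ ‖v‖_V·‖q‖_Q for all v, q, satisfying the inf-sup condition with constant β > 0. Then for every continuous linear functional g on V there exists a unique pair (v,p) ∈ V × Q such that a(v,φ) + c(v,φ) + b(φ,p) = g(φ) for all φ ∈ V and b(v,q) = 0 for all q ∈ Q; moreover ‖v‖_V ≤ (1−c₀)⁻¹·‖g‖_{V'}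 and ‖p‖_Q ≤ β⁻¹·(1 + (1+c₀)/(1−c₀))·‖g‖_{V'}. -/
open scoped RealInnerProductSpace
open InnerProductSpace

set_option maxHeartbeats 4000000 in
/-- Well-posedness of the unsymmetric saddle-point problem (equation (23)
of the paper), where the Newton-linearized convection form `c` perturbs the
symmetric form `a` with relative bound `c₀ < 1`. -/
theorem wellposed_unsymmetric
    {V Q : Type*}
    [NormedAddCommGroup V] [InnerProductSpace ℝ V] [CompleteSpace V]
    [NormedAddCommGroup Q] [InnerProductSpace ℝ Q] [CompleteSpace Q]
    (a c : V →ₗ[ℝ] V →ₗ[ℝ] ℝ) (b : V →ₗ[ℝ] Q →ₗ[ℝ] ℝ)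
    (c₀ β : ℝ)
    (ha_symm : ∀ u v : V, a u v = a v u)
    (ha_norm : ∀ v : V, a v v = ‖v‖ ^ 2)
    (hc_bdd : ∀ u v : V, |c u v| ≤ c₀ * ‖u‖ * ‖v‖)
    (hc₀ : 0 ≤ c₀) (hc₁ : c₀ < 1)
    (hb_bdd : ∀ (v : V) (q : Q), |b v q| ≤ ‖v‖ * ‖q‖)
    (hβ : 0 < β)
    (hinfsup : ∀ q : Q, β * ‖q‖ ≤ ⨆ v : {v : V // v ≠ 0}, b v.1 q / ‖v.1‖) :
    ∀ g : V →L[ℝ] ℝ,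
      (∃! vp : V × Q,
        (∀ φ : V, a vp.1 φ + c vp.1 φ + b φ vp.2 = g φ) ∧ (∀ q : Q, b vp.1 q = 0)) ∧
      (∀ vp : V × Q,
        ((∀ φ : V, a vp.1 φ + c vp.1 φ + b φ vp.2 = g φ) ∧ (∀ q : Q, b vp.1 q = 0)) →
          ‖vp.1‖ ≤ (1 - c₀)⁻¹ * ‖g‖ ∧
          ‖vp.2‖ ≤ β⁻¹ * (1 + (1 + c₀) / (1 - c₀)) * ‖g‖) := by
  have h1c : (0:ℝ) < 1 - c₀ := by linarith
  -- `a` is the inner product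
  have ha : ∀ u v : V, a u v = ⟪u, v⟫_ℝ := by
    intro u v
    have hexp : a (u+v) (u+v) = a u u + a u v + a v u + a v v := by
      simp [map_add, LinearMap.add_apply]; ring
    have hpol := real_inner_add_add_self u v
    have h := ha_norm (u + v)
    have h1 := ha_norm u
    have h2 := ha_norm v
    have e1 := real_inner_self_eq_norm_sq u
    have e2 := real_inner_self_eq_norm_sq v
    have e3 := real_inner_self_eq_norm_sq (u+v)
    have hs := ha_symm u v
    linarith
  -- the operator B* : Q → V
  set bL : Q →L[ℝ] V →L[ℝ] ℝ := LinearMap.mkContinuous₂ b.flip 1 (fun q v => by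
    simpa [Real.norm_eq_abs, mul_comm] using hb_bdd v q) with hbL
  have hbLa : ∀ (q : Q) (v : V), bL q v = b v q := fun q v => rfl
  set Bop₀ : Q →ₗ[ℝ] V :=
    { toFun := fun q => (toDual ℝ V).symm (bL q)
      map_add' := fun q q' => by simp
      map_smul' := fun r q => by simp } with hBopdef
  have hBnorm : ∀ q : Q, ‖Bop₀ q‖ ≤ 1 * ‖q‖ := by
    intro q
    have h1 : ‖Bop₀ q‖ = ‖bL q‖ := (toDual ℝ V).symm.norm_map (bL q)
    rw [h1, one_mul]
    refine (bL q).opNorm_le_bound (norm_nonneg q) (fun v => ?_)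
    rw [hbLa q v]
    simpa [Real.norm_eq_abs, mul_comm] using hb_bdd v q
  set Bop : Q →L[ℝ] V := Bop₀.mkContinuous 1 hBnorm with hBopC
  have hBopa : ∀ q : Q, Bop q = Bop₀ q := fun q => rfl
  have hBop : ∀ (q : Q) (φ : V), ⟪Bop q, φ⟫_ℝ = b φ q := by
    intro q φ
    rw [hBopa, hBopdef]
    simp only [LinearMap.coe_mk, AddHom.coe_mk, toDual_symm_apply]
    exact hbLa q φ
  have hBlow : ∀ q : Q, β * ‖q‖ ≤ ‖Bop q‖ := by
    intro q
    refine (hinfsup q).trans (Real.iSup_le (fun v => ?_) (norm_nonneg _))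
    have hvpos : 0 < ‖v.1‖ := norm_pos_iff.mpr v.2
    rw [div_le_iff₀ hvpos]
    calc b v.1 q = ⟪Bop q, v.1⟫_ℝ := (hBop q v.1).symm
      _ ≤ ‖Bop q‖ * ‖v.1‖ := real_inner_le_norm _ _
  set K : Submodule ℝ V := LinearMap.range (Bop : Q →ₗ[ℝ] V) with hK
  have hKclosed : IsClosed (K : Set V) := by
    have anti : AntilipschitzWith (⟨β⁻¹, by positivity⟩ : NNReal) Bop := by
      apply Bop.antilipschitz_of_bound
      intro q
      change ‖q‖ ≤ β⁻¹ * ‖Bop q‖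
      rw [inv_mul_eq_div, le_div_iff₀ hβ]
      linarith [hBlow q, mul_comm β ‖q‖]
    simpa [hK, LinearMap.coe_range] using anti.isClosed_range Bop.uniformContinuous
  set Z : Submodule ℝ V := Kᗮ with hZdef
  have hZ : ∀ v : V, v ∈ Z ↔ ∀ q : Q, b v q = 0 := by
    intro v
    rw [hZdef, Submodule.mem_orthogonal]
    constructor
    · intro h q
      rw [← hBop q v]
      exact h (Bop q) ⟨q, rfl⟩
    · rintro h u ⟨q, rfl⟩
      rw [ContinuousLinearMap.coe_coe, hBop q v]
      exact h q
  haveI : CompleteSpace Z := K.isClosed_orthogonal.completeSpace_coe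
  -- Lax-Milgram on Z
  set M : Z →ₗ[ℝ] Z →ₗ[ℝ] ℝ := LinearMap.mk₂ ℝ (fun u v => a u.1 v.1 + c u.1 v.1)
    (fun u u' v => by simp [map_add, LinearMap.add_apply]; ring)
    (fun s u v => by simp [map_smul, LinearMap.smul_apply, smul_eq_mul]; ring)
    (fun u v v' => by simp [map_add]; ring)
    (fun s u v => by simp [map_smul, smul_eq_mul]; ring) with hM
  have hnz : ∀ u : Z, ‖u‖ = ‖(u:V)‖ := fun u => rfl
  have hMb : ∀ u v : Z, ‖M u v‖ ≤ (1 + c₀) * ‖u‖ * ‖v‖ := by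
    intro u v
    have h1 : |a u.1 v.1| ≤ ‖u.1‖ * ‖v.1‖ := by rw [ha]; exact abs_real_inner_le_norm _ _
    have h2 := hc_bdd u.1 v.1
    have hM1 : M u v = a u.1 v.1 + c u.1 v.1 := rfl
    rw [Real.norm_eq_abs, hM1, hnz u, hnz v]
    calc |a u.1 v.1 + c u.1 v.1| ≤ |a u.1 v.1| + |c u.1 v.1| := abs_add_le _ _
      _ ≤ ‖u.1‖ * ‖v.1‖ + c₀ * ‖u.1‖ * ‖v.1‖ := by linarith
      _ = (1 + c₀) * ‖(u:V)‖ * ‖(v:V)‖ := by ring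
  set D : Z →L[ℝ] Z →L[ℝ] ℝ := M.mkContinuous₂ (1 + c₀) hMb with hD
  have hDa : ∀ u v : Z, D u v = a u.1 v.1 + c u.1 v.1 := by
    intro u v
    rw [hD, LinearMap.mkContinuous₂_apply, hM, LinearMap.mk₂_apply]
  have coercive : IsCoercive D := by
    refine ⟨1 - c₀, h1c, fun u => ?_⟩
    have h2 := abs_le.mp (hc_bdd u.1 u.1)
    have h3 : D u u = ‖(u:V)‖^2 + c u.1 u.1 := by rw [hDa, ha_norm]
    rw [hnz u, h3]
    nlinarith [sq_nonneg ‖(u:V)‖]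
  -- uniqueness helper: homogeneous problem has only zero solution
  have hzero : ∀ (u : V) (d : Q), (∀ φ : V, a u φ + c u φ + b φ d = 0) →
      (∀ q : Q, b u q = 0) → u = 0 ∧ d = 0 := by
    intro u d h1 h2
    have hu : u = 0 := by
      have h3 := h1 u
      rw [ha_norm, h2 d] at h3
      have h5 := abs_le.mp (hc_bdd u u)
      have hsq : ‖u‖^2 = ‖u‖*‖u‖ := pow_two _
      have h7 : ‖u‖ = 0 := by
        by_contra hne
        have hpos : 0 < ‖u‖ := (norm_nonneg u).lt_of_ne (Ne.symm hne)
        have hq : 0 < ‖u‖ * ‖u‖ := mul_pos hpos hpos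
        nlinarith [mul_pos h1c hq]
      exact norm_eq_zero.mp h7
    subst hu
    refine ⟨rfl, ?_⟩
    have h3 : ∀ φ : V, b φ d = 0 := by
      intro φ
      have := h1 φ
      simpa using this
    have h4 : β * ‖d‖ ≤ 0 :=
      (hinfsup d).trans (Real.iSup_le (fun v => by rw [h3]; simp) le_rfl)
    have h5 : ‖d‖ ≤ 0 := by nlinarith [norm_nonneg d]
    exact norm_eq_zero.mp (le_antisymm h5 (norm_nonneg d))
  intro g
  -- a priori bounds for any solution
  have hg : ∀ φ : V, |g φ| ≤ ‖g‖ * ‖φ‖ := fun φ => by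
    simpa [Real.norm_eq_abs] using g.le_opNorm φ
  have hbounds : ∀ (v : V) (p : Q), (∀ φ : V, a v φ + c v φ + b φ p = g φ) →
      (∀ q : Q, b v q = 0) →
      ‖v‖ ≤ (1 - c₀)⁻¹ * ‖g‖ ∧ ‖p‖ ≤ β⁻¹ * (1 + (1 + c₀) / (1 - c₀)) * ‖g‖ := by
    intro v p h1 h2
    have key : (1 - c₀) * ‖v‖ * ‖v‖ ≤ ‖g‖ * ‖v‖ := by
      have h3 := h1 v
      rw [ha_norm, h2 p] at h3
      have h5 := abs_le.mp (hc_bdd v v)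
      have h6 := abs_le.mp (hg v)
      nlinarith [pow_two ‖v‖]
    have hv : ‖v‖ ≤ (1 - c₀)⁻¹ * ‖g‖ := by
      rcases eq_or_lt_of_le (norm_nonneg v) with h | h
      · rw [← h]; positivity
      · have h4 := (mul_le_mul_iff_of_pos_right h).mp key
        rw [inv_mul_eq_div, le_div_iff₀ h1c]
        linarith [mul_comm ‖v‖ (1 - c₀)]
    refine ⟨hv, ?_⟩
    have hsup : β * ‖p‖ ≤ ‖g‖ + (1 + c₀) * ‖v‖ := by
      refine (hinfsup p).trans (Real.iSup_le (fun φ => ?_)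
        (by nlinarith [norm_nonneg v, (norm_nonneg g : (0:ℝ) ≤ ‖g‖)]))
      have hφpos : 0 < ‖φ.1‖ := norm_pos_iff.mpr φ.2
      rw [div_le_iff₀ hφpos]
      have h3 := h1 φ.1
      have h5 := abs_le.mp (hc_bdd v φ.1)
      have h6 := abs_le.mp (hg φ.1)
      have h7 : |a v φ.1| ≤ ‖v‖ * ‖φ.1‖ := by rw [ha]; exact abs_real_inner_le_norm _ _
      have h8 := abs_le.mp h7
      nlinarith
    rw [show β⁻¹ * (1 + (1 + c₀) / (1 - c₀)) * ‖g‖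
        = (‖g‖ + (1 + c₀) * ((1 - c₀)⁻¹ * ‖g‖)) / β by
      field_simp, le_div_iff₀ hβ]
    have h9 : (1 + c₀) * ‖v‖ ≤ (1 + c₀) * ((1 - c₀)⁻¹ * ‖g‖) :=
      mul_le_mul_of_nonneg_left hv (by linarith)
    linarith [mul_comm ‖p‖ β]
  -- existence: Lax-Milgram on Z
  set E := coercive.continuousLinearEquivOfBilin with hE
  set gz : Z →L[ℝ] ℝ := g.comp Z.subtypeL with hgz
  set w : Z := (toDual ℝ Z).symm gz with hw
  set vZ : Z := E.symm w with hvZ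
  have hvsol : ∀ φ : Z, a vZ.1 φ.1 + c vZ.1 φ.1 = g φ.1 := by
    intro φ
    have h1 : ⟪E vZ, φ⟫_ℝ = D vZ φ := coercive.continuousLinearEquivOfBilin_apply vZ φ
    rw [hvZ, E.apply_symm_apply, hw, toDual_symm_apply] at h1
    rw [hDa] at h1
    have h2 : gz φ = g φ.1 := rfl
    rw [h2] at h1
    rw [← hvZ] at h1
    exact h1.symm
  set cv : V →L[ℝ] ℝ := (c vZ.1).mkContinuous (c₀ * ‖(vZ:V)‖) (fun φ => by
    simpa [Real.norm_eq_abs, mul_assoc] using hc_bdd vZ.1 φ) with hcv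
  have hcva : ∀ φ : V, cv φ = c vZ.1 φ := fun φ => rfl
  set R : V := (toDual ℝ V).symm g - vZ.1 - (toDual ℝ V).symm cv with hR
  have hRin : ∀ φ : V, ⟪R, φ⟫_ℝ = g φ - a vZ.1 φ - c vZ.1 φ := by
    intro φ
    rw [ha vZ.1 φ, hR, ← hcva φ]
    simp [inner_sub_left, toDual_symm_apply]
  have hRZ : R ∈ Zᗮ := by
    rw [Submodule.mem_orthogonal]
    intro u hu
    rw [real_inner_comm, hRin u]
    have h1 := hvsol ⟨u, hu⟩
    simp only at h1
    linarith
  have hZperp : Zᗮ = K := by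
    rw [hZdef, Submodule.orthogonal_orthogonal_eq_closure,
      hKclosed.submodule_topologicalClosure_eq]
  obtain ⟨p, hp⟩ : ∃ q : Q, Bop q = R := by
    have h1 : R ∈ K := hZperp ▸ hRZ
    exact h1
  have eq1 : ∀ φ : V, a vZ.1 φ + c vZ.1 φ + b φ p = g φ := by
    intro φ
    have h := hRin φ
    rw [← hp, hBop] at h
    linarith
  have eq2 : ∀ q : Q, b vZ.1 q = 0 := (hZ vZ.1).mp vZ.2
  constructor
  · refine ⟨(vZ.1, p), ⟨eq1, eq2⟩, ?_⟩
    rintro ⟨y1, y2⟩ ⟨hy1, hy2⟩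
    obtain ⟨h1, h2⟩ := hzero (y1 - vZ.1) (y2 - p)
      (fun φ => by
        simp only [map_sub, LinearMap.sub_apply]
        linarith [hy1 φ, eq1 φ])
      (fun q => by
        simp only [map_sub, LinearMap.sub_apply]
        linarith [hy2 q, eq2 q])
    exact Prod.ext_iff.mpr ⟨sub_eq_zero.mp h1, sub_eq_zero.mp h2⟩
  · intro vp hvp
    exact hbounds vp.1 vp.2 hvp.1 hvp.2
end
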